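/- A vector Ψ in H = ℓ²(ℤ;ℂ²) satisfies (U − e^{iλ})Ψ = 0 if and only if Ψ satisfies the transfer-matrix recurrence (JΨ)(x+1) = T_x(λ)·(JΨ)(x) for all x ∈ ℤ. -/

import Mathlib

open scoped Real

private lemma key_alg (a b E D p q r s : ℂ) (ha : a ≠ 0) (hE : E ≠ 0) (hD : D ≠ 0)
    (hab : (starRingEnd ℂ) a * a + (starRingEnd ℂ) b * b = 1) :
    (D * (a * q + b * r) = D * E * p ∧
      D * (-((starRingEnd ℂ) b) * q + (starRingEnd ℂ) a * r) = D * E * s) ↔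
    (q = a⁻¹ * (E * p + -b * r) ∧
      s = a⁻¹ * (-((starRingEnd ℂ) b) * p + E⁻¹ * r)) := by
  constructor
  · rintro ⟨h1, h2⟩
    have c1 : a * q + b * r = E * p := mul_left_cancel₀ hD (by linear_combination h1)
    have c2 : -((starRingEnd ℂ) b) * q + (starRingEnd ℂ) a * r = E * s :=
      mul_left_cancel₀ hD (by linear_combination h2)
    constructor
    · field_simp
      linear_combination c1
    · field_simp
      linear_combination (-((starRingEnd ℂ) b)) * c1 + (-a) * c2 + r * hab
  · rintro ⟨h1, h2⟩
    have c1 : a * q + b * r = E * p := by field_simp at h1; linear_combination h1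
    have c2 : a * E * s = -((starRingEnd ℂ) b) * E * p + r := by
      field_simp at h2; linear_combination h2
    refine ⟨by linear_combination D * c1, ?_⟩
    have key : (a * E) * (D * (-((starRingEnd ℂ) b) * q + (starRingEnd ℂ) a * r)) =
        (a * E) * (D * E * s) := by
      linear_combination (-(D * E * (starRingEnd ℂ) b)) * c1 + (-(D * E)) * c2 + D * E * r * hab
    exact mul_left_cancel₀ (mul_ne_zero ha hE) key

/-- The coin matrix `C = e^{iΔ}[[α, β], [−conj β, conj α]]`. -/
noncomputable def coinM (a b : ℂ) (d : ℝ) : Matrix (Fin 2) (Fin 2) ℂ :=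
  Complex.exp (Complex.I * d) • !![a, b; -(starRingEnd ℂ b), starRingEnd ℂ a]

/-- The transfer matrix `T(λ) = (1/α)[[e^{i(λ−Δ)}, −β], [−conj β, e^{−i(λ−Δ)}]]`. -/
noncomputable def transferM (a b : ℂ) (d l : ℝ) : Matrix (Fin 2) (Fin 2) ℂ :=
  a⁻¹ • !![Complex.exp (Complex.I * (l - d)), -b;
           -(starRingEnd ℂ b), Complex.exp (-(Complex.I * (l - d)))]

/-- Square-summability of `Ψ : ℤ → ℂ²`, i.e. `Σ_{x∈ℤ} ‖Ψ(x)‖²_{ℂ²} < ∞`. -/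
def SqSummable (Ψ : ℤ → Fin 2 → ℂ) : Prop :=
  Summable fun x : ℤ => ‖Ψ x 0‖ ^ 2 + ‖Ψ x 1‖ ^ 2

/-- The time evolution `U = SC`:  `(UΨ)(x) = ((C_{x+1}Ψ(x+1))_L, (C_{x−1}Ψ(x−1))_R)ᵀ`. -/
noncomputable def Uact (C : ℤ → Matrix (Fin 2) (Fin 2) ℂ) (Ψ : ℤ → Fin 2 → ℂ) :
    ℤ → Fin 2 → ℂ :=
  fun x => ![(C (x + 1)).mulVec (Ψ (x + 1)) 0, (C (x - 1)).mulVec (Ψ (x - 1)) 1]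

/-- The unitary `J`:  `(JΨ)(x) = (Ψ_L(x−1), Ψ_R(x))ᵀ`. -/
def Jact (Ψ : ℤ → Fin 2 → ℂ) : ℤ → Fin 2 → ℂ := fun x => ![Ψ (x - 1) 0, Ψ x 1]

/-- `Ψ ∈ ℓ²(ℤ;ℂ²)` satisfies `(U − e^{iλ})Ψ = 0` if and only if
`(JΨ)(x+1) = T_x(λ)·(JΨ)(x)` for all `x ∈ ℤ`. -/
theorem eigenequation_iff_transfer_recurrence
    (α β : ℤ → ℂ) (Δ : ℤ → ℝ)
    (hα : ∀ x, α x ≠ 0)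
    (hαβ : ∀ x, ‖α x‖ ^ 2 + ‖β x‖ ^ 2 = 1)
    (hΔ : ∀ x, 0 ≤ Δ x ∧ Δ x < 2 * π)
    (l : ℝ) (hl : 0 ≤ l ∧ l < 2 * π)
    (Ψ : ℤ → Fin 2 → ℂ) (hΨ : SqSummable Ψ) :
    Uact (fun x => coinM (α x) (β x) (Δ x)) Ψ = Complex.exp (Complex.I * l) • Ψ ↔
      ∀ x : ℤ, Jact Ψ (x + 1) = (transferM (α x) (β x) (Δ x) l).mulVec (Jact Ψ x) := by
  have hDne : ∀ x : ℤ, Complex.exp (Complex.I * Δ x) ≠ 0 := fun x => Complex.exp_ne_zero _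
  have hEne : ∀ x : ℤ, Complex.exp (Complex.I * (l - Δ x)) ≠ 0 := fun x => Complex.exp_ne_zero _
  have hDE : ∀ x : ℤ, Complex.exp (Complex.I * Δ x) * Complex.exp (Complex.I * (l - Δ x))
      = Complex.exp (Complex.I * l) := by
    intro x
    rw [← Complex.exp_add]
    congr 1
    push_cast
    ring
  have habc : ∀ x, (starRingEnd ℂ) (α x) * α x + (starRingEnd ℂ) (β x) * β x = 1 := by
    intro x
    have key : ∀ z : ℂ, (starRingEnd ℂ) z * z = ((‖z‖ ^ 2 : ℝ) : ℂ) := by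
      intro z
      rw [mul_comm, Complex.mul_conj, Complex.normSq_eq_norm_sq]
    rw [key, key, ← Complex.ofReal_add, hαβ x, Complex.ofReal_one]
  -- LHS componentwise
  have hUiff : (Uact (fun x => coinM (α x) (β x) (Δ x)) Ψ = Complex.exp (Complex.I * l) • Ψ) ↔
      ∀ x : ℤ, (Complex.exp (Complex.I * Δ x) * (α x * Ψ x 0 + β x * Ψ x 1)
          = Complex.exp (Complex.I * Δ x) * Complex.exp (Complex.I * (l - Δ x)) * Ψ (x - 1) 0 ∧
        Complex.exp (Complex.I * Δ x) *
            (-((starRingEnd ℂ) (β x)) * Ψ x 0 + (starRingEnd ℂ) (α x) * Ψ x 1)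
          = Complex.exp (Complex.I * Δ x) * Complex.exp (Complex.I * (l - Δ x)) * Ψ (x + 1) 1) := by
    constructor
    · intro h x
      have h0 := congrFun (congrFun h (x - 1)) 0
      have h1 := congrFun (congrFun h (x + 1)) 1
      simp only [Uact, coinM, Pi.smul_apply, smul_eq_mul, Matrix.smul_apply,
        Matrix.mulVec, dotProduct, Fin.sum_univ_two, Matrix.cons_val', Matrix.cons_val_zero,
        Matrix.cons_val_one, Matrix.head_cons, Matrix.empty_val', Matrix.cons_val_fin_one,
        Matrix.head_fin_const, Matrix.of_apply, sub_add_cancel, add_sub_cancel_right] at h0 h1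
      rw [hDE x]
      exact ⟨by linear_combination h0, by linear_combination h1⟩
    · intro h
      funext x i
      fin_cases i
      · have h0 := (h (x + 1)).1
        rw [hDE] at h0
        simp only [Uact, coinM, Pi.smul_apply, smul_eq_mul, Matrix.smul_apply,
          Matrix.mulVec, dotProduct, Fin.sum_univ_two, Matrix.cons_val',
          Matrix.cons_val_zero, Matrix.cons_val_one, Matrix.head_cons, Matrix.empty_val',
          Matrix.cons_val_fin_one, Matrix.head_fin_const, Matrix.of_apply, add_sub_cancel_right,
          Fin.zero_eta, Fin.mk_one, Fin.isValue] at h0 ⊢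
        linear_combination h0
      · have h1 := (h (x - 1)).2
        rw [hDE] at h1
        simp only [Uact, coinM, Pi.smul_apply, smul_eq_mul, Matrix.smul_apply,
          Matrix.mulVec, dotProduct, Fin.sum_univ_two, Matrix.cons_val',
          Matrix.cons_val_zero, Matrix.cons_val_one, Matrix.head_cons, Matrix.empty_val',
          Matrix.cons_val_fin_one, Matrix.head_fin_const, Matrix.of_apply, sub_add_cancel,
          Fin.zero_eta, Fin.mk_one, Fin.isValue] at h1 ⊢
        linear_combination h1
  -- RHS componentwise
  have hTiff : ∀ x : ℤ,
      (Jact Ψ (x + 1) = (transferM (α x) (β x) (Δ x) l).mulVec (Jact Ψ x)) ↔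
      (Ψ x 0 = (α x)⁻¹ * (Complex.exp (Complex.I * (l - Δ x)) * Ψ (x - 1) 0 + -(β x) * Ψ x 1) ∧
        Ψ (x + 1) 1 = (α x)⁻¹ * (-((starRingEnd ℂ) (β x)) * Ψ (x - 1) 0
          + (Complex.exp (Complex.I * (l - Δ x)))⁻¹ * Ψ x 1)) := by
    intro x
    rw [funext_iff, Fin.forall_fin_two]
    simp only [Jact, transferM, Pi.smul_apply, smul_eq_mul, Matrix.smul_apply,
      Matrix.mulVec, dotProduct, Fin.sum_univ_two, Matrix.cons_val', Matrix.cons_val_zero,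
      Matrix.cons_val_one, Matrix.head_cons, Matrix.empty_val', Matrix.cons_val_fin_one,
      Matrix.head_fin_const, Matrix.of_apply, add_sub_cancel_right, Complex.exp_neg]
    constructor <;> rintro ⟨h1, h2⟩ <;>
      exact ⟨by linear_combination h1, by linear_combination h2⟩
  rw [hUiff]
  constructor
  · intro h x
    rw [hTiff x]
    exact (key_alg (α x) (β x) (Complex.exp (Complex.I * (l - Δ x)))
      (Complex.exp (Complex.I * Δ x)) (Ψ (x - 1) 0) (Ψ x 0) (Ψ x 1) (Ψ (x + 1) 1)
      (hα x) (hEne x) (hDne x) (habc x)).mp (h x)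
  · intro h x
    exact (key_alg (α x) (β x) (Complex.exp (Complex.I * (l - Δ x)))
      (Complex.exp (Complex.I * Δ x)) (Ψ (x - 1) 0) (Ψ x 0) (Ψ x 1) (Ψ (x + 1) 1)
      (hα x) (hEne x) (hDne x) (habc x)).mpr ((hTiff x).mp (h x))
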